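/- Let H be a Hilbert space, S : H → H a linear isometry, and E, O two orthogonal projections (multiplication by indicator functions in the application). If the operator P = O ∘ S ∘ E satisfies ‖P‖ < 1, then with C₀ = 1 - ‖P‖, for every f ∈ H one has ‖f‖ ≤ C₀⁻¹ ‖(I - O) S f‖ + (C₀⁻¹ + 1) ‖(I - E) f‖; consequently ‖f‖² ≤ 2(C₀⁻¹+1)² ( ‖(I-E)f‖² + ‖(I-O)Sf‖² ). -/

import Mathlib

lemma aux_proj_contract {H : Type*} [NormedAddCommGroup H] [InnerProductSpace ℂ H]
    [CompleteSpace H] (O : H →L[ℂ] H) (hOproj : IsIdempotentElem O)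
    (hOsa : IsSelfAdjoint O) (x : H) : ‖x - O x‖ ≤ ‖x‖ := by
  have hadj : ContinuousLinearMap.adjoint O = O :=
    (ContinuousLinearMap.isSelfAdjoint_iff'.mp hOsa)
  have horth : (inner ℂ (O x) (x - O x) : ℂ) = 0 := by
    have : (inner ℂ (O x) (x - O x) : ℂ) = inner ℂ x (O (x - O x)) := by
      nth_rewrite 1 [← hadj]
      exact ContinuousLinearMap.adjoint_inner_left O _ _
    rw [this, map_sub]
    have : O (O x) = O x := ContinuousLinearMap.ext_iff.mp hOproj x
    rw [this, sub_self, inner_zero_right]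
  have hpy : ‖O x + (x - O x)‖ ^ 2 = ‖O x‖ ^ 2 + ‖x - O x‖ ^ 2 := by
    rw [norm_add_sq (𝕜 := ℂ) (O x) (x - O x), horth]
    simp
  have hx : O x + (x - O x) = x := by abel
  rw [hx] at hpy
  nlinarith [norm_nonneg (O x), norm_nonneg x, norm_nonneg (x - O x)]

/-- Let `H` be a Hilbert space, `S` a linear isometry of `H` and `E, O`
orthogonal projections. If `P = O ∘ S ∘ E` has `‖P‖ < 1`, then with `C₀ = 1 - ‖P‖`,
for every `f ∈ H`:
`‖f‖ ≤ C₀⁻¹ ‖(I - O) S f‖ + (C₀⁻¹ + 1) ‖(I - E) f‖`, and consequently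
`‖f‖² ≤ 2 (C₀⁻¹ + 1)² (‖(I - E) f‖² + ‖(I - O) S f‖²)`. -/
theorem norm_bound_of_projection_composition_norm_lt_one
    {H : Type*} [NormedAddCommGroup H] [InnerProductSpace ℂ H] [CompleteSpace H]
    (S : H →ₗᵢ[ℂ] H) (E O : H →L[ℂ] H)
    (hEproj : IsIdempotentElem E) (hOproj : IsIdempotentElem O)
    (hEsa : IsSelfAdjoint E) (hOsa : IsSelfAdjoint O)
    (P : H →L[ℂ] H)
    (hP : ∀ f : H, P f = O (S (E f)))
    (hPnorm : ‖P‖ < 1) :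
    ∀ f : H,
      ‖f‖ ≤ (1 - ‖P‖)⁻¹ * ‖S f - O (S f)‖ + ((1 - ‖P‖)⁻¹ + 1) * ‖f - E f‖ ∧
      ‖f‖ ^ 2 ≤ 2 * ((1 - ‖P‖)⁻¹ + 1) ^ 2 * (‖f - E f‖ ^ 2 + ‖S f - O (S f)‖ ^ 2) := by
  intro f
  have hC : (0:ℝ) < 1 - ‖P‖ := by linarith
  have hCinv : (0:ℝ) < (1 - ‖P‖)⁻¹ := inv_pos.mpr hC
  have hCinv1 : (1:ℝ) ≤ (1 - ‖P‖)⁻¹ := by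
    have h1 : 1 - ‖P‖ ≤ 1 := by linarith [norm_nonneg P]
    have := one_le_inv_iff₀.mpr ⟨hC, h1⟩
    exact this
  -- key: P (E f) = O (S (E f))
  have hEE : E (E f) = E f := ContinuousLinearMap.ext_iff.mp hEproj f
  have hPE : P (E f) = O (S (E f)) := by rw [hP, hEE]
  have hSE : ‖S (E f)‖ = ‖E f‖ := S.norm_map _
  have hPb : ‖O (S (E f))‖ ≤ ‖P‖ * ‖E f‖ := by
    rw [← hPE]; exact P.le_opNorm _
  have h1 : (1 - ‖P‖) * ‖E f‖ ≤ ‖S (E f) - O (S (E f))‖ := by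
    have := norm_sub_norm_le (S (E f)) (O (S (E f)))
    rw [hSE] at this
    nlinarith
  have hdiff : S (E f) - O (S (E f))
      = (S f - O (S f)) - ((S (f - E f)) - O (S (f - E f))) := by
    simp only [map_sub, LinearIsometry.map_sub]
    abel
  have h2 : ‖S (E f) - O (S (E f))‖ ≤ ‖S f - O (S f)‖ + ‖f - E f‖ := by
    rw [hdiff]
    refine (norm_sub_le _ _).trans ?_
    have := aux_proj_contract O hOproj hOsa (S (f - E f))
    rw [S.norm_map] at this
    linarith
  have hEfb : ‖E f‖ ≤ (1 - ‖P‖)⁻¹ * (‖S f - O (S f)‖ + ‖f - E f‖) := by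
    have h3 : (1 - ‖P‖) * ‖E f‖ ≤ ‖S f - O (S f)‖ + ‖f - E f‖ := h1.trans h2
    calc ‖E f‖ = (1 - ‖P‖)⁻¹ * ((1 - ‖P‖) * ‖E f‖) := by field_simp
      _ ≤ _ := mul_le_mul_of_nonneg_left h3 hCinv.le
  have hf : ‖f‖ ≤ ‖E f‖ + ‖f - E f‖ := by
    have : f = E f + (f - E f) := by abel
    calc ‖f‖ = ‖E f + (f - E f)‖ := by rw [← this]
      _ ≤ _ := norm_add_le _ _
  have main : ‖f‖ ≤ (1 - ‖P‖)⁻¹ * ‖S f - O (S f)‖ + ((1 - ‖P‖)⁻¹ + 1) * ‖f - E f‖ := by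
    nlinarith
  refine ⟨main, ?_⟩
  set a := ‖f - E f‖
  set b := ‖S f - O (S f)‖
  set C := (1 - ‖P‖)⁻¹
  have ha : 0 ≤ a := norm_nonneg _
  have hb : 0 ≤ b := norm_nonneg _
  have h0 : 0 ≤ ‖f‖ := norm_nonneg _
  nlinarith [sq_nonneg (a - b), sq_nonneg (a + b), mul_nonneg ha hb, sq_nonneg C]
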